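/- Let S be a semigroup and I ⊆ S a two-sided ideal (for all s ∈ S and x ∈ I, both s·x ∈ I and x·s ∈ I), and set U = S \ I. Suppose S has a presentation (π, R) over an alphabet A such that (i) π(a) ∈ U for every a ∈ A, and (ii) for every relation (u, v) ∈ R the element π*(u) (= π*(v)) lies in U. Then the restricted Cayley presentation of S on U defines S; that is, the semigroup homomorphism e : FreeSemigroup U → S induced by the inclusion U ↪ S is surjective, and for all words u, v ∈ FreeSemigroup U one has e(u) = e(v) if and only if (u, v) lies in the congruence generated by Q = {(x_s·x_t, x_{st}) : s, t ∈ U, s·t ∈ U}. -/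

import Mathlib

/-- `(π, R)` is a presentation of the semigroup `S` over the alphabet `X`:
the induced homomorphism `π* : FreeSemigroup X → S` is surjective, and two words have
the same image under `π*` iff they are related by the congruence generated by `R`. -/
def IsPresentation {X : Type*} {S : Type*} [Semigroup S] (π : X → S)
    (R : FreeSemigroup X → FreeSemigroup X → Prop) : Prop :=
  Function.Surjective (FreeSemigroup.lift π) ∧
    ∀ u v : FreeSemigroup X, FreeSemigroup.lift π u = FreeSemigroup.lift π v ↔ conGen R u v

/-- The defining relations of the Cayley table presentation of `S` restricted to `U`:
`x_s · x_t = x_{st}` whenever `s, t, s·t ∈ U`. -/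
def cayleyRel {S : Type*} [Semigroup S] (U : Set S) :
    FreeSemigroup U → FreeSemigroup U → Prop := fun u v =>
  ∃ (s t : S) (hs : s ∈ U) (ht : t ∈ U) (hst : s * t ∈ U),
    u = FreeSemigroup.of ⟨s, hs⟩ * FreeSemigroup.of ⟨t, ht⟩ ∧
    v = FreeSemigroup.of ⟨s * t, hst⟩

/-- If a semigroup `S` has a presentation all of whose generators and defining relations
represent elements of `U = S \ I` (for a two-sided ideal `I`), then the restriction of the
Cayley table presentation of `S` to `U` defines `S`. -/
theorem stmt_0 {S : Type*} [Semigroup S] (I : Set S)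
    (hI : ∀ s : S, ∀ x ∈ I, s * x ∈ I ∧ x * s ∈ I)
    (U : Set S) (hU : U = Iᶜ)
    {A : Type*} (π : A → S) (R : FreeSemigroup A → FreeSemigroup A → Prop)
    (hpres : IsPresentation π R)
    (hgen : ∀ a : A, π a ∈ U)
    (hrel : ∀ u v : FreeSemigroup A, R u v → FreeSemigroup.lift π u ∈ U) :
    IsPresentation (fun x : U => (x : S)) (cayleyRel U) := by
  classical
  set e : FreeSemigroup U →ₙ* S := FreeSemigroup.lift (fun x : U => (x : S)) with he
  set θ : FreeSemigroup A →ₙ* FreeSemigroup U :=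
    FreeSemigroup.map (fun a => (⟨π a, hgen a⟩ : U)) with hθ
  have heθ : ∀ w, e (θ w) = FreeSemigroup.lift π w := by
    have h : e.comp θ = FreeSemigroup.lift π := by
      apply FreeSemigroup.hom_ext
      funext a
      simp [he, hθ]
    intro w
    exact DFunLike.congr_fun h w
  have hsplit : ∀ s t : S, s * t ∈ U → s ∈ U ∧ t ∈ U := by
    intro s t hst
    subst hU
    constructor
    · intro hs; exact hst ((hI t s hs).2)
    · intro ht; exact hst ((hI s t ht).1)
  have reduce : ∀ w : FreeSemigroup U, ∀ h : e w ∈ U,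
      conGen (cayleyRel U) w (FreeSemigroup.of ⟨e w, h⟩) := by
    intro w
    induction w using FreeSemigroup.recOnMul with
    | ih1 x => intro h; exact ConGen.Rel.refl _
    | ih2 x y _ ihy =>
      intro h
      have hew : e (FreeSemigroup.of x * y) = (x : S) * e y := by
        rw [map_mul, FreeSemigroup.lift_of]
      have hxy : (x : S) * e y ∈ U := hew ▸ h
      have hy : e y ∈ U := (hsplit _ _ hxy).2
      have h1 : conGen (cayleyRel U) (FreeSemigroup.of x * y)
          (FreeSemigroup.of x * FreeSemigroup.of ⟨e y, hy⟩) :=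
        Con.mul _ (ConGen.Rel.refl _) (ihy hy)
      have h2 : conGen (cayleyRel U)
          (FreeSemigroup.of x * FreeSemigroup.of ⟨e y, hy⟩)
          (FreeSemigroup.of ⟨(x : S) * e y, hxy⟩) :=
        ConGen.Rel.of _ _ ⟨(x : S), e y, x.2, hy, hxy, rfl, rfl⟩
      have h3 : (FreeSemigroup.of (⟨(x : S) * e y, hxy⟩ : U)) =
          FreeSemigroup.of ⟨e (FreeSemigroup.of x * y), h⟩ := by
        congr 1
        exact Subtype.ext hew.symm
      exact (h1.trans h2).trans (h3 ▸ ConGen.Rel.refl _)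
  constructor
  · intro s
    obtain ⟨w, hw⟩ := hpres.1 s
    exact ⟨θ w, by rw [← he, heθ, hw]⟩
  · intro u v
    constructor
    · intro huv
      set ψ : FreeSemigroup U →ₙ* FreeSemigroup A :=
        FreeSemigroup.lift (fun x : U => Classical.choose (hpres.1 (x : S))) with hψ
      have hψof : ∀ x : U, FreeSemigroup.lift π (ψ (FreeSemigroup.of x)) = (x : S) := by
        intro x
        simp only [hψ, FreeSemigroup.lift_of]
        exact Classical.choose_spec (hpres.1 (x : S))
      have hπψ : ∀ w, FreeSemigroup.lift π (ψ w) = e w := by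
        have h : (FreeSemigroup.lift π).comp ψ = e := by
          apply FreeSemigroup.hom_ext
          funext x
          simpa [he] using hψof x
        intro w
        exact DFunLike.congr_fun h w
      have hθψ : ∀ w : FreeSemigroup U, conGen (cayleyRel U) (θ (ψ w)) w := by
        intro w
        induction w using FreeSemigroup.recOnMul with
        | ih1 x =>
          have h1 : e (θ (ψ (FreeSemigroup.of x))) ∈ U := by
            rw [heθ, hψof]; exact x.2
          have hr := reduce _ h1
          have hx : FreeSemigroup.of (⟨e (θ (ψ (FreeSemigroup.of x))), h1⟩ : U) =
              FreeSemigroup.of x := by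
            congr 1
            refine Subtype.ext ?_
            show e (θ (ψ (FreeSemigroup.of x))) = (x : S)
            rw [heθ, hψof]
          rw [hx] at hr
          exact hr
        | ih2 x y ihx ihy =>
          have hmul : θ (ψ (FreeSemigroup.of x * y)) =
              θ (ψ (FreeSemigroup.of x)) * θ (ψ y) := by
            rw [map_mul, map_mul]
          rw [hmul]
          exact Con.mul _ ihx ihy
      have hRQ : ∀ w w' : FreeSemigroup A, conGen R w w' →
          conGen (cayleyRel U) (θ w) (θ w') := by
        intro w w' h
        induction h with
        | of x y hxy =>
          have hx : FreeSemigroup.lift π x ∈ U := hrel x y hxy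
          have hxy' : FreeSemigroup.lift π x = FreeSemigroup.lift π y :=
            (hpres.2 x y).mpr (ConGen.Rel.of x y hxy)
          have hy : FreeSemigroup.lift π y ∈ U := hxy' ▸ hx
          have h1 : e (θ x) ∈ U := by rw [heθ]; exact hx
          have h2 : e (θ y) ∈ U := by rw [heθ]; exact hy
          have r1 := reduce (θ x) h1
          have r2 := reduce (θ y) h2
          have heq : FreeSemigroup.of (⟨e (θ x), h1⟩ : U) =
              FreeSemigroup.of (⟨e (θ y), h2⟩ : U) := by
            congr 1
            refine Subtype.ext ?_
            show e (θ x) = e (θ y)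
            rw [heθ, heθ, hxy']
          rw [heq] at r1
          exact r1.trans r2.symm
        | refl x => exact ConGen.Rel.refl _
        | symm _ ih => exact ih.symm
        | trans _ _ ih1 ih2 => exact ih1.trans ih2
        | mul h1 h2 ih1 ih2 =>
          have hmul : ∀ a b : FreeSemigroup A, θ (a * b) = θ a * θ b := map_mul θ
          rw [hmul, hmul]
          exact Con.mul _ ih1 ih2
      have key : conGen R (ψ u) (ψ v) := by
        apply (hpres.2 (ψ u) (ψ v)).mp
        rw [hπψ, hπψ]
        exact huv
      exact ((hθψ u).symm.trans (hRQ _ _ key)).trans (hθψ v)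
    · intro h
      refine (Con.conGen_le (c := Con.ker e)).mpr ?_ h
      rintro x y ⟨s, t, hs, ht, hst, rfl, rfl⟩
      show e _ = e _
      simp [he]
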